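/- arXiv:0801.2210 — 13 statements merged into one kernel-verified Lean document; each statement's English description precedes it below -/
import Mathlib

section
/- Let ψ be a 2-cocycle on L_{λ,μ} with ψ(L_0, M_n) = 0 and ψ(L_0, L_n) = 0 for all n. Then for all m, n ∈ ℤ, (m + n + 2μ)·ψ(L_m, M_n) = 0. -/
theorem stmt_1 (lam mu : ℂ)
    (V : Type*) [LieRing V] [LieAlgebra ℂ V]
    (L Y M : ℤ → V)
    (hLL : ∀ n m : ℤ, ⁅L n, L m⁆ = ((m : ℂ) - n) • L (m + n))
    (hLY : ∀ n m : ℤ, ⁅L n, Y m⁆ = ((m : ℂ) - (lam + 1) * n / 2 + mu) • Y (m + n))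
    (hYY : ∀ n m : ℤ, ⁅Y n, Y m⁆ = ((m : ℂ) - n) • M (m + n))
    (hLM : ∀ n m : ℤ, ⁅L n, M m⁆ = ((m : ℂ) - lam * n + 2 * mu) • M (m + n))
    (hYMbr : ∀ n m : ℤ, ⁅Y n, M m⁆ = 0)
    (hMMbr : ∀ n m : ℤ, ⁅M n, M m⁆ = 0)
    (ψ : V →ₗ[ℂ] V →ₗ[ℂ] ℂ)
    (hskew : ∀ x y : V, ψ x y = - ψ y x)
    (hcoc : ∀ x y z : V, ψ ⁅x, y⁆ z + ψ ⁅y, z⁆ x + ψ ⁅z, x⁆ y = 0)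
    (h0M : ∀ n : ℤ, ψ (L 0) (M n) = 0)
    (h0L : ∀ n : ℤ, ψ (L 0) (L n) = 0) :
    ∀ m n : ℤ, ((m : ℂ) + n + 2 * mu) * ψ (L m) (M n) = 0 := by
  intro m n
  have h := hcoc (L 0) (L m) (M n)
  have hML : ⁅M n, L 0⁆ = -(((n : ℂ) - lam * 0 + 2 * mu) • M (n + 0)) := by
    rw [← lie_skew, hLM]; norm_num
  rw [hLL, hLM, hML, map_smul, map_smul, map_neg, map_smul, LinearMap.smul_apply,
    LinearMap.smul_apply, LinearMap.neg_apply, LinearMap.smul_apply] at h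
  rw [hskew (M (n + m)) (L 0), h0M] at h
  simp only [add_zero, Int.cast_zero, sub_zero, mul_zero] at h
  have h2 : ψ (M n) (L m) = -ψ (L m) (M n) := by rw [hskew]
  rw [h2] at h
  simp only [smul_eq_mul, Int.cast_zero, sub_zero, mul_zero, neg_zero, add_zero] at h
  ring_nf at h ⊢
  linear_combination h
end

section
/- Let ψ be a 2-cocycle on L_{λ,μ} with ψ(L_0, Y_n) = ψ(L_0, M_n) = 0 for all n. Then for all m, n ∈ ℤ, (m + n + 3μ)·ψ(Y_m, M_n) = 0. -/
theorem stmt_2 (lam mu : ℂ)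
    (V : Type*) [LieRing V] [LieAlgebra ℂ V]
    (L Y M : ℤ → V)
    (hLL : ∀ n m : ℤ, ⁅L n, L m⁆ = ((m : ℂ) - n) • L (m + n))
    (hLY : ∀ n m : ℤ, ⁅L n, Y m⁆ = ((m : ℂ) - (lam + 1) * n / 2 + mu) • Y (m + n))
    (hYY : ∀ n m : ℤ, ⁅Y n, Y m⁆ = ((m : ℂ) - n) • M (m + n))
    (hLM : ∀ n m : ℤ, ⁅L n, M m⁆ = ((m : ℂ) - lam * n + 2 * mu) • M (m + n))
    (hYMbr : ∀ n m : ℤ, ⁅Y n, M m⁆ = 0)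
    (hMMbr : ∀ n m : ℤ, ⁅M n, M m⁆ = 0)
    (ψ : V →ₗ[ℂ] V →ₗ[ℂ] ℂ)
    (hskew : ∀ x y : V, ψ x y = - ψ y x)
    (hcoc : ∀ x y z : V, ψ ⁅x, y⁆ z + ψ ⁅y, z⁆ x + ψ ⁅z, x⁆ y = 0)
    (h0Y : ∀ n : ℤ, ψ (L 0) (Y n) = 0)
    (h0M : ∀ n : ℤ, ψ (L 0) (M n) = 0) :
    ∀ m n : ℤ, ((m : ℂ) + n + 3 * mu) * ψ (Y m) (M n) = 0 := by
  intro m n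
  have h := hcoc (L 0) (Y m) (M n)
  rw [hLY, hYMbr, ← neg_neg (⁅M n, L 0⁆ : V), lie_skew, hLM] at h
  simp only [Int.cast_zero, mul_zero, sub_zero, map_zero, LinearMap.zero_apply,
    map_smul, map_neg, LinearMap.smul_apply, LinearMap.neg_apply, smul_eq_mul] at h
  simp only [add_zero] at h
  rw [hskew (M n) (Y m)] at h
  push_cast at h ⊢
  ring_nf at h ⊢
  linear_combination h
end

section
/- Let ψ be a 2-cocycle on L_{λ,μ} with ψ(L_0, M_n) = 0 for all n. Then for all m, n ∈ ℤ, (m + n + 4μ)·ψ(M_m, M_n) = 0. -/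
theorem stmt_3 (lam mu : ℂ)
    (V : Type*) [LieRing V] [LieAlgebra ℂ V]
    (L Y M : ℤ → V)
    (hLL : ∀ n m : ℤ, ⁅L n, L m⁆ = ((m : ℂ) - n) • L (m + n))
    (hLY : ∀ n m : ℤ, ⁅L n, Y m⁆ = ((m : ℂ) - (lam + 1) * n / 2 + mu) • Y (m + n))
    (hYY : ∀ n m : ℤ, ⁅Y n, Y m⁆ = ((m : ℂ) - n) • M (m + n))
    (hLM : ∀ n m : ℤ, ⁅L n, M m⁆ = ((m : ℂ) - lam * n + 2 * mu) • M (m + n))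
    (hYMbr : ∀ n m : ℤ, ⁅Y n, M m⁆ = 0)
    (hMMbr : ∀ n m : ℤ, ⁅M n, M m⁆ = 0)
    (ψ : V →ₗ[ℂ] V →ₗ[ℂ] ℂ)
    (hskew : ∀ x y : V, ψ x y = - ψ y x)
    (hcoc : ∀ x y z : V, ψ ⁅x, y⁆ z + ψ ⁅y, z⁆ x + ψ ⁅z, x⁆ y = 0)
    (h0M : ∀ n : ℤ, ψ (L 0) (M n) = 0) :
    ∀ m n : ℤ, ((m : ℂ) + n + 4 * mu) * ψ (M m) (M n) = 0 := by
  intro m n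
  have h := hcoc (L 0) (M m) (M n)
  have h2 : ⁅M n, L 0⁆ = -((((n:ℤ) : ℂ) - lam * ((0:ℤ) : ℂ) + 2 * mu) • M (n + 0)) := by
    rw [← lie_skew, hLM]
  rw [hLM, hMMbr, h2, map_smul, map_neg, map_smul, map_zero] at h
  simp only [LinearMap.zero_apply, LinearMap.smul_apply, smul_eq_mul, add_zero,
    Int.cast_zero, mul_zero, sub_zero, zero_add, LinearMap.neg_apply] at h
  have hsk := hskew (M n) (M m)
  rw [hsk] at h
  have : ((m : ℂ) + 2 * mu) * ψ (M m) (M n)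
      + ((n : ℂ) + 2 * mu) * ψ (M m) (M n) = 0 := by linear_combination h
  linear_combination this
end

section
/- Let ψ be a 2-cocycle on L_{λ,μ} with ψ(L_0, Y_n) = 0 and ψ(L_0, L_n) = 0 for all n. Then for all m, n ∈ ℤ, (m + n + μ)·ψ(L_m, Y_n) = 0. -/
theorem stmt_4 (lam mu : ℂ)
    (V : Type*) [LieRing V] [LieAlgebra ℂ V]
    (L Y M : ℤ → V)
    (hLL : ∀ n m : ℤ, ⁅L n, L m⁆ = ((m : ℂ) - n) • L (m + n))
    (hLY : ∀ n m : ℤ, ⁅L n, Y m⁆ = ((m : ℂ) - (lam + 1) * n / 2 + mu) • Y (m + n))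
    (hYY : ∀ n m : ℤ, ⁅Y n, Y m⁆ = ((m : ℂ) - n) • M (m + n))
    (hLM : ∀ n m : ℤ, ⁅L n, M m⁆ = ((m : ℂ) - lam * n + 2 * mu) • M (m + n))
    (hYMbr : ∀ n m : ℤ, ⁅Y n, M m⁆ = 0)
    (hMMbr : ∀ n m : ℤ, ⁅M n, M m⁆ = 0)
    (ψ : V →ₗ[ℂ] V →ₗ[ℂ] ℂ)
    (hskew : ∀ x y : V, ψ x y = - ψ y x)
    (hcoc : ∀ x y z : V, ψ ⁅x, y⁆ z + ψ ⁅y, z⁆ x + ψ ⁅z, x⁆ y = 0)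
    (h0Y : ∀ n : ℤ, ψ (L 0) (Y n) = 0)
    (h0L : ∀ n : ℤ, ψ (L 0) (L n) = 0) :
    ∀ m n : ℤ, ((m : ℂ) + n + mu) * ψ (L m) (Y n) = 0 := by
  intro m n
  have h := hcoc (L 0) (L m) (Y n)
  have hy : ⁅Y n, L 0⁆ = -(((n : ℂ) - (lam + 1) * 0 / 2 + mu) • Y (n + 0)) := by
    rw [← lie_skew, hLY]; norm_num
  rw [hLL 0 m, hLY m n, hy] at h
  simp only [map_smul, map_neg, LinearMap.smul_apply, LinearMap.neg_apply, smul_eq_mul] at h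
  simp only [add_zero] at h
  rw [hskew (Y (n + m)) (L 0), h0Y, hskew (Y n) (L m)] at h
  push_cast at h
  ring_nf at h ⊢
  linear_combination h
end

section
/- Suppose μ ∉ (1/2)ℤ and μ ∉ {1/4 + ℤ, 3/4 + ℤ}. Let ψ be a 2-cocycle on L_{λ,μ} with ψ(L_0, Y_n) = ψ(L_0, M_n) = ψ(L_0, L_n) = 0 for all n. Then ψ(M_m, M_n) = 0 for all m, n ∈ ℤ. -/
theorem stmt_6 (lam mu : ℂ)
    (hmu2 : ∀ k : ℤ, 2 * mu ≠ (k : ℂ))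
    (hmu14 : ∀ k : ℤ, mu ≠ 1 / 4 + (k : ℂ))
    (hmu34 : ∀ k : ℤ, mu ≠ 3 / 4 + (k : ℂ))
    (V : Type*) [LieRing V] [LieAlgebra ℂ V]
    (L Y M : ℤ → V)
    (hLL : ∀ n m : ℤ, ⁅L n, L m⁆ = ((m : ℂ) - n) • L (m + n))
    (hLY : ∀ n m : ℤ, ⁅L n, Y m⁆ = ((m : ℂ) - (lam + 1) * n / 2 + mu) • Y (m + n))
    (hYY : ∀ n m : ℤ, ⁅Y n, Y m⁆ = ((m : ℂ) - n) • M (m + n))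
    (hLM : ∀ n m : ℤ, ⁅L n, M m⁆ = ((m : ℂ) - lam * n + 2 * mu) • M (m + n))
    (hYMbr : ∀ n m : ℤ, ⁅Y n, M m⁆ = 0)
    (hMMbr : ∀ n m : ℤ, ⁅M n, M m⁆ = 0)
    (ψ : V →ₗ[ℂ] V →ₗ[ℂ] ℂ)
    (hskew : ∀ x y : V, ψ x y = - ψ y x)
    (hcoc : ∀ x y z : V, ψ ⁅x, y⁆ z + ψ ⁅y, z⁆ x + ψ ⁅z, x⁆ y = 0)
    (h0Y : ∀ n : ℤ, ψ (L 0) (Y n) = 0)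
    (h0M : ∀ n : ℤ, ψ (L 0) (M n) = 0)
    (h0L : ∀ n : ℤ, ψ (L 0) (L n) = 0) :
    ∀ m n : ℤ, ψ (M m) (M n) = 0 := by

  have key : ∀ m n : ℤ, ((m:ℂ) + n + 4*mu) ≠ 0 := by
    intro m n h
    rcases Int.even_or_odd (m+n) with ⟨k, hk⟩ | ⟨t, ht⟩
    · apply hmu2 (-k)
      have hk' : (m:ℂ) + n = (k:ℂ) + k := by exact_mod_cast hk
      push_cast
      linear_combination (h - hk')/2
    · have ht' : (m:ℂ) + n = 2*(t:ℂ) + 1 := by exact_mod_cast ht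
      rcases Int.even_or_odd t with ⟨s, hs⟩ | ⟨s, hs⟩
      · apply hmu34 (-s-1)
        have hs' : (t:ℂ) = (s:ℂ) + s := by exact_mod_cast hs
        push_cast
        linear_combination (h - ht')/4 - hs'/2
      · apply hmu14 (-s-1)
        have hs' : (t:ℂ) = 2*(s:ℂ) + 1 := by exact_mod_cast hs
        push_cast
        linear_combination (h - ht')/4 - hs'/2
  intro m n
  have hc := hcoc (L 0) (M m) (M n)
  rw [hLM 0 m, hMMbr m n, ← lie_skew, hLM 0 n] at hc
  simp only [map_zero, map_smul, map_neg, LinearMap.zero_apply, LinearMap.smul_apply,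
    LinearMap.neg_apply, smul_eq_mul, Int.cast_zero, mul_zero, sub_zero, add_zero,
    zero_add] at hc
  rw [hskew (M n) (M m)] at hc
  have hne := key m n
  have : ((m:ℂ) + n + 4*mu) * ψ (M m) (M n) = 0 := by linear_combination hc
  exact (mul_eq_zero.mp this).resolve_left hne
end

section
/- Let ψ be a 2-cocycle on L_{λ,μ} vanishing on all pairs (L_m, L_n). Then for all m ∈ ℤ, ((λ+3)m + 2μ)·ψ(M_{−3μ}, Y_0) + 2(λm − μ)·ψ(M_{−m−3μ}, Y_m) = 0, where indices involving μ are valid under the assumption 3μ ∈ ℤ. -/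
theorem stmt_7 (lam mu : ℂ) (t : ℤ) (ht : (t : ℂ) = 3 * mu)
    (V : Type*) [LieRing V] [LieAlgebra ℂ V]
    (L Y M : ℤ → V)
    (hLL : ∀ n m : ℤ, ⁅L n, L m⁆ = ((m : ℂ) - n) • L (m + n))
    (hLY : ∀ n m : ℤ, ⁅L n, Y m⁆ = ((m : ℂ) - (lam + 1) * n / 2 + mu) • Y (m + n))
    (hYY : ∀ n m : ℤ, ⁅Y n, Y m⁆ = ((m : ℂ) - n) • M (m + n))
    (hLM : ∀ n m : ℤ, ⁅L n, M m⁆ = ((m : ℂ) - lam * n + 2 * mu) • M (m + n))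
    (hYMbr : ∀ n m : ℤ, ⁅Y n, M m⁆ = 0)
    (hMMbr : ∀ n m : ℤ, ⁅M n, M m⁆ = 0)
    (ψ : V →ₗ[ℂ] V →ₗ[ℂ] ℂ)
    (hskew : ∀ x y : V, ψ x y = - ψ y x)
    (hcoc : ∀ x y z : V, ψ ⁅x, y⁆ z + ψ ⁅y, z⁆ x + ψ ⁅z, x⁆ y = 0)
    (hLL0 : ∀ a b : ℤ, ψ (L a) (L b) = 0) :
    ∀ m : ℤ, ((lam + 3) * m + 2 * mu) * ψ (M (-t)) (Y 0)
      + 2 * (lam * m - mu) * ψ (M (-m - t)) (Y m) = 0 := by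
  intro m
  have h := hcoc (L (-m)) (Y m) (M (-t))
  rw [hLY, hYMbr, ← lie_skew (M (-t)) (L (-m)), hLM] at h
  simp only [map_smul, map_neg, map_zero, LinearMap.smul_apply, LinearMap.neg_apply,
    LinearMap.zero_apply, smul_eq_mul, add_zero, zero_add] at h
  have hs1 := hskew (Y (m + -m)) (M (-t))
  have hs2 : M (-t + -m) = M (-m - t) := by ring_nf
  rw [hs2] at h
  have h0 : Y (m + -m) = Y 0 := by norm_num
  rw [h0] at h
  rw [hskew (Y 0) (M (-t))] at h
  push_cast at h
  linear_combination (-2 : ℂ) * h + 2 * (ψ (M (-m - t))) (Y m) * ht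
end

section
/- Suppose μ ∈ 1/2 + ℤ. Let ψ be a 2-cocycle on L_{λ,μ} with ψ(L_0, x) = 0 for x ∈ {Y_n : n ∈ ℤ} and ψ(L_m, L_n) = 0 for all m,n. Then ψ(L_m, Y_n) = 0 and ψ(Y_m, M_n) = 0 for all m, n ∈ ℤ. -/
theorem stmt_9 (lam mu : ℂ) (k : ℤ) (hk : mu = 1 / 2 + (k : ℂ))
    (V : Type*) [LieRing V] [LieAlgebra ℂ V]
    (L Y M : ℤ → V)
    (hLL : ∀ n m : ℤ, ⁅L n, L m⁆ = ((m : ℂ) - n) • L (m + n))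
    (hLY : ∀ n m : ℤ, ⁅L n, Y m⁆ = ((m : ℂ) - (lam + 1) * n / 2 + mu) • Y (m + n))
    (hYY : ∀ n m : ℤ, ⁅Y n, Y m⁆ = ((m : ℂ) - n) • M (m + n))
    (hLM : ∀ n m : ℤ, ⁅L n, M m⁆ = ((m : ℂ) - lam * n + 2 * mu) • M (m + n))
    (hYMbr : ∀ n m : ℤ, ⁅Y n, M m⁆ = 0)
    (hMMbr : ∀ n m : ℤ, ⁅M n, M m⁆ = 0)
    (ψ : V →ₗ[ℂ] V →ₗ[ℂ] ℂ)
    (hskew : ∀ x y : V, ψ x y = - ψ y x)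
    (hcoc : ∀ x y z : V, ψ ⁅x, y⁆ z + ψ ⁅y, z⁆ x + ψ ⁅z, x⁆ y = 0)
    (h0Y : ∀ n : ℤ, ψ (L 0) (Y n) = 0)
    (hLL0 : ∀ m n : ℤ, ψ (L m) (L n) = 0) :
    ∀ m n : ℤ, ψ (L m) (Y n) = 0 ∧ ψ (Y m) (M n) = 0 := by
  have hne1 : ∀ a : ℤ, (a : ℂ) + mu ≠ 0 := by
    intro a h
    rw [hk] at h
    have h2 : ((2 * a + 2 * k + 1 : ℤ) : ℂ) = 0 := by push_cast; linear_combination 2 * h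
    have h3 : (2 * a + 2 * k + 1 : ℤ) = 0 := by exact_mod_cast h2
    omega
  have hne3 : ∀ a : ℤ, (a : ℂ) + 3 * mu ≠ 0 := by
    intro a h
    rw [hk] at h
    have h2 : ((2 * a + 6 * k + 3 : ℤ) : ℂ) = 0 := by push_cast; linear_combination 2 * h
    have h3 : (2 * a + 6 * k + 3 : ℤ) = 0 := by exact_mod_cast h2
    omega
  have hLY0 : ∀ m n : ℤ, ψ (L m) (Y n) = 0 := by
    intro m n
    have hc := hcoc (L 0) (L m) (Y n)
    have e1 : ⁅L 0, L m⁆ = (m : ℂ) • L m := by rw [hLL]; norm_num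
    have e2 : ⁅Y n, L 0⁆ = (-((n : ℂ) + mu)) • Y n := by
      rw [← lie_skew, hLY]; norm_num; module
    rw [e1, e2, hLY] at hc
    simp only [map_smul, LinearMap.smul_apply, smul_eq_mul] at hc
    rw [hskew (Y (n + m)) (L 0), h0Y, hskew (Y n) (L m)] at hc
    have hkey : ((m : ℂ) + n + mu) * ψ (L m) (Y n) = 0 := by linear_combination hc
    have := hne1 (m + n)
    push_cast at this
    rcases mul_eq_zero.mp hkey with h | h
    · exact absurd h (by rw [show (m : ℂ) + n + mu = ((m : ℤ) + n : ℂ) + mu by push_cast; ring]; exact_mod_cast this)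
    · exact h
  have hYM0 : ∀ m n : ℤ, ψ (Y m) (M n) = 0 := by
    intro m n
    have hc := hcoc (L 0) (Y m) (M n)
    have e1 : ⁅L 0, Y m⁆ = ((m : ℂ) + mu) • Y m := by rw [hLY]; norm_num
    have e2 : ⁅M n, L 0⁆ = (-((n : ℂ) + 2 * mu)) • M n := by
      rw [← lie_skew, hLM]; norm_num; module
    rw [e1, e2, hYMbr] at hc
    simp only [map_smul, LinearMap.smul_apply, smul_eq_mul, map_zero, LinearMap.zero_apply] at hc
    rw [hskew (M n) (Y m)] at hc
    have hkey : ((m : ℂ) + n + 3 * mu) * ψ (Y m) (M n) = 0 := by linear_combination hc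
    have := hne3 (m + n)
    push_cast at this
    rcases mul_eq_zero.mp hkey with h | h
    · exact absurd h (by rw [show (m : ℂ) + n + 3 * mu = ((m : ℤ) + n : ℂ) + 3 * mu by push_cast; ring]; exact_mod_cast this)
    · exact h
  exact fun m n => ⟨hLY0 m n, hYM0 m n⟩
end

section
/- Let ψ be a 2-cocycle on L_{λ,μ} with ψ(L_a, L_b) = 0 for all a, b. Then for all m, n ∈ ℤ: (m + 2μ − n(1+λ))·ψ(L_{−m−2μ}, M_m) = ((m+2μ)(1+λ) − n)·ψ(L_n, M_{−n−2μ}) + (m + 2μ + n)·ψ(L_{n−m−2μ}, M_{m−n}), assuming 2μ ∈ ℤ so all indices are integers. -/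
theorem stmt_10 (lam mu : ℂ) (t : ℤ) (ht : (t : ℂ) = 2 * mu)
    (V : Type*) [LieRing V] [LieAlgebra ℂ V]
    (L Y M : ℤ → V)
    (hLL : ∀ n m : ℤ, ⁅L n, L m⁆ = ((m : ℂ) - n) • L (m + n))
    (hLY : ∀ n m : ℤ, ⁅L n, Y m⁆ = ((m : ℂ) - (lam + 1) * n / 2 + mu) • Y (m + n))
    (hYY : ∀ n m : ℤ, ⁅Y n, Y m⁆ = ((m : ℂ) - n) • M (m + n))
    (hLM : ∀ n m : ℤ, ⁅L n, M m⁆ = ((m : ℂ) - lam * n + 2 * mu) • M (m + n))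
    (hYMbr : ∀ n m : ℤ, ⁅Y n, M m⁆ = 0)
    (hMMbr : ∀ n m : ℤ, ⁅M n, M m⁆ = 0)
    (ψ : V →ₗ[ℂ] V →ₗ[ℂ] ℂ)
    (hskew : ∀ x y : V, ψ x y = - ψ y x)
    (hcoc : ∀ x y z : V, ψ ⁅x, y⁆ z + ψ ⁅y, z⁆ x + ψ ⁅z, x⁆ y = 0)
    (hLL0 : ∀ a b : ℤ, ψ (L a) (L b) = 0) :
    ∀ m n : ℤ, ((m : ℂ) + 2 * mu - n * (1 + lam)) * ψ (L (-m - t)) (M m)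
      = (((m : ℂ) + 2 * mu) * (1 + lam) - n) * ψ (L n) (M (-n - t))
        + ((m : ℂ) + 2 * mu + n) * ψ (L (n - m - t)) (M (m - n)) := by
  intro m n
  have h := hcoc (L (-t - m)) (L n) (M (m - n))
  rw [hLL, hLM, ← lie_skew (M (m - n)) (L (-t - m)), hLM] at h
  have e1 : m - n + n = m := by ring
  have e2 : m - n + (-t - m) = -n - t := by ring
  have e3 : n + (-t - m) = n - m - t := by ring
  have e4 : -t - m = -m - t := by ring
  rw [e1, e2, e3, e4] at h
  simp only [map_smul, map_neg, LinearMap.smul_apply, LinearMap.neg_apply,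
    smul_eq_mul] at h
  rw [hskew (M m) (L (-m - t)), hskew (M (-n - t)) (L n)] at h
  push_cast at h ⊢
  rw [ht] at h
  linear_combination -h
end

section
/- Suppose λ ∉ {−5, −3, 1} and μ ∈ ℤ. Let ψ be a 2-cocycle on L_{λ,μ} with ψ(L_a, L_b) = 0 for all a, b and ψ(L_1, Y_{−μ−1}) = 0 and ψ(L_0, Y_n) = 0 for n ≠ −μ. Then for all m ∈ ℤ: ψ(L_{−m−μ}, Y_m) = 2(m+μ+1)(2 + (m+μ−1)(3+λ))·ψ(L_{−1}, Y_{1−μ}) / (5 − 4λ − λ²). -/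
theorem stmt_12 (lam : ℂ) (mu : ℤ)
    (hlam : lam ≠ -5 ∧ lam ≠ -3 ∧ lam ≠ 1)
    (V : Type*) [LieRing V] [LieAlgebra ℂ V]
    (L Y M : ℤ → V)
    (hLL : ∀ n m : ℤ, ⁅L n, L m⁆ = ((m : ℂ) - n) • L (m + n))
    (hLY : ∀ n m : ℤ, ⁅L n, Y m⁆ = ((m : ℂ) - (lam + 1) * n / 2 + (mu : ℂ)) • Y (m + n))
    (hYY : ∀ n m : ℤ, ⁅Y n, Y m⁆ = ((m : ℂ) - n) • M (m + n))
    (hLM : ∀ n m : ℤ, ⁅L n, M m⁆ = ((m : ℂ) - lam * n + 2 * (mu : ℂ)) • M (m + n))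
    (hYMbr : ∀ n m : ℤ, ⁅Y n, M m⁆ = 0)
    (hMMbr : ∀ n m : ℤ, ⁅M n, M m⁆ = 0)
    (ψ : V →ₗ[ℂ] V →ₗ[ℂ] ℂ)
    (hskew : ∀ x y : V, ψ x y = - ψ y x)
    (hcoc : ∀ x y z : V, ψ ⁅x, y⁆ z + ψ ⁅y, z⁆ x + ψ ⁅z, x⁆ y = 0)
    (hLL0 : ∀ a b : ℤ, ψ (L a) (L b) = 0)
    (h1Y : ψ (L 1) (Y (-mu - 1)) = 0)
    (h0Y : ∀ n : ℤ, n ≠ -mu → ψ (L 0) (Y n) = 0) :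
    ∀ m : ℤ, ψ (L (-m - mu)) (Y m)
      = 2 * ((m : ℂ) + mu + 1) * (2 + ((m : ℂ) + mu - 1) * (3 + lam))
        * ψ (L (-1)) (Y (1 - mu)) / (5 - 4 * lam - lam ^ 2) := by
  intro m
  have hD : (5 - 4 * lam - lam ^ 2 : ℂ) ≠ 0 := by
    intro h
    have h0 : (lam + 5) * (lam - 1) = 0 := by linear_combination -h
    rcases mul_eq_zero.mp h0 with h' | h'
    · exact hlam.1 (by linear_combination h')
    · exact hlam.2.2 (by linear_combination h')
  -- cocycle A : (L 1, L (-m-mu), Y (m-1))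
  have hA := hcoc (L 1) (L (-m - mu)) (Y (m - 1))
  rw [hLL, hLY, ← lie_skew (Y (m - 1)) (L 1), hLY] at hA
  rw [show (-m - mu) + 1 = 1 - m - mu from by ring,
      show (m - 1) + (-m - mu) = -mu - 1 from by ring,
      show (m - 1) + 1 = m from by ring] at hA
  simp only [map_smul, map_neg, LinearMap.smul_apply, LinearMap.neg_apply, smul_eq_mul] at hA
  rw [hskew (Y (-mu - 1)) (L 1), hskew (Y m) (L (-m - mu)), h1Y] at hA
  push_cast at hA
  -- cocycle B : (L (-1), L (1-m-mu), Y m)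
  have hB := hcoc (L (-1)) (L (1 - m - mu)) (Y m)
  rw [hLL, hLY, ← lie_skew (Y m) (L (-1)), hLY] at hB
  rw [show (1 - m - mu) + -1 = -m - mu from by ring,
      show m + (1 - m - mu) = 1 - mu from by ring,
      show m + -1 = m - 1 from by ring] at hB
  simp only [map_smul, map_neg, LinearMap.smul_apply, LinearMap.neg_apply, smul_eq_mul] at hB
  rw [hskew (Y (1 - mu)) (L (-1)), hskew (Y (m - 1)) (L (1 - m - mu))] at hB
  push_cast at hB
  
  rw [eq_div_iff hD]
  linear_combination (4*((m:ℂ)+(mu:ℂ))+4)*hB + (4*((m:ℂ)+(mu:ℂ))+2*(lam+1))*hA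
end

section
/- Suppose λ ∉ {−5, −3, −1, 1} and μ ∈ ℤ*. Let ψ be a 2-cocycle on L_{λ,μ} with ψ(L_a, L_b) = 0 for all a, b, ψ(L_0, Y_n) = 0 for n ≠ −μ, and ψ(L_1, Y_{−μ−1}) = 0. Then ψ(L_{−1}, Y_{1−μ}) = 0 and consequently ψ(L_m, Y_n) = 0 for all m, n with m + n + μ = 0. -/
theorem stmt_13 (lam : ℂ) (mu : ℤ) (hmu : mu ≠ 0)
    (hlam : lam ≠ -5 ∧ lam ≠ -3 ∧ lam ≠ -1 ∧ lam ≠ 1)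
    (V : Type*) [LieRing V] [LieAlgebra ℂ V]
    (L Y M : ℤ → V)
    (hLL : ∀ n m : ℤ, ⁅L n, L m⁆ = ((m : ℂ) - n) • L (m + n))
    (hLY : ∀ n m : ℤ, ⁅L n, Y m⁆ = ((m : ℂ) - (lam + 1) * n / 2 + (mu : ℂ)) • Y (m + n))
    (hYY : ∀ n m : ℤ, ⁅Y n, Y m⁆ = ((m : ℂ) - n) • M (m + n))
    (hLM : ∀ n m : ℤ, ⁅L n, M m⁆ = ((m : ℂ) - lam * n + 2 * (mu : ℂ)) • M (m + n))
    (hYMbr : ∀ n m : ℤ, ⁅Y n, M m⁆ = 0)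
    (hMMbr : ∀ n m : ℤ, ⁅M n, M m⁆ = 0)
    (ψ : V →ₗ[ℂ] V →ₗ[ℂ] ℂ)
    (hskew : ∀ x y : V, ψ x y = - ψ y x)
    (hcoc : ∀ x y z : V, ψ ⁅x, y⁆ z + ψ ⁅y, z⁆ x + ψ ⁅z, x⁆ y = 0)
    (hLL0 : ∀ a b : ℤ, ψ (L a) (L b) = 0)
    (h0Y : ∀ n : ℤ, n ≠ -mu → ψ (L 0) (Y n) = 0)
    (h1Y : ψ (L 1) (Y (-mu - 1)) = 0) :
    ψ (L (-1)) (Y (1 - mu)) = 0 ∧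
    ∀ m n : ℤ, m + n + mu = 0 → ψ (L m) (Y n) = 0 := by
  obtain ⟨h5, h3, hm1lam, h1lam⟩ := hlam
  set f : ℤ → ℂ := fun m => ψ (L m) (Y (-mu - m)) with hf
  have key : ∀ a b : ℤ, ((b : ℂ) - a) * f (a + b)
      + (((a : ℂ) + b) + (lam + 1) * b / 2) * f a
      - (((a : ℂ) + b) + (lam + 1) * a / 2) * f b = 0 := by
    intro a b
    have h := hcoc (L a) (L b) (Y (-mu - (a + b)))
    rw [hLL a b, hLY b (-mu - (a + b)), ← lie_skew (Y (-mu - (a + b))) (L a),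
      hLY a (-mu - (a + b))] at h
    simp only [map_smul, map_neg, LinearMap.smul_apply, LinearMap.neg_apply,
      smul_eq_mul] at h
    rw [hskew (Y (-mu - (a + b) + b)) (L a), hskew (Y (-mu - (a + b) + a)) (L b)] at h
    rw [show -mu - (a + b) + b = -mu - a by ring, show -mu - (a + b) + a = -mu - b by ring,
      show b + a = a + b by ring] at h
    push_cast at h
    simp only [hf]
    linear_combination h
  have hf1 : f 1 = 0 := h1Y
  have k1 := key 1 (-1)
  have k2 := key (-1) 2
  have k3 := key 1 (-2)
  have k4 := key 2 (-2)
  norm_num [hf1] at k1 k2 k3 k4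
  have hfm1 : f (-1) = 0 := by
    have hz : (-3 : ℂ) * (lam + 1) * (lam + 3) * f (-1) = 0 := by
      linear_combination (1 - lam) * k4 - 2 * (1 - lam) * k1 - 2 * (lam + 1) * k2
        + 2 * (lam + 1) * k3
    have hne : (-3 : ℂ) * (lam + 1) * (lam + 3) ≠ 0 := by
      intro h
      rcases mul_eq_zero.mp h with h' | h'
      · rcases mul_eq_zero.mp h' with h'' | h''
        · norm_num at h''
        · exact hm1lam (by linear_combination h'')
      · exact h3 (by linear_combination h')
    exact (mul_eq_zero.mp hz).resolve_left hne
  have hf0 : f 0 = 0 := by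
    have := k1
    rw [hfm1] at this
    linear_combination (-1/2 : ℂ) * this
  have hlam1 : (1 : ℂ) - lam ≠ 0 := fun h => h1lam (by linear_combination -h)
  have hf2 : f 2 = 0 := by
    have := k2
    rw [hfm1] at this
    have h2 : ((1 : ℂ) - lam) / 2 * f 2 = 0 := by linear_combination -this
    rcases mul_eq_zero.mp h2 with h' | h'
    · exact absurd (by linear_combination 2 * h') hlam1
    · exact h'
  have hfm2 : f (-2) = 0 := by
    have := k3
    rw [hfm1] at this
    have h2 : ((1 : ℂ) - lam) / 2 * f (-2) = 0 := by linear_combination this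
    rcases mul_eq_zero.mp h2 with h' | h'
    · exact absurd (by linear_combination 2 * h') hlam1
    · exact h'
  have up : ∀ n : ℕ, f ((n : ℤ) + 2) = 0 := by
    intro n
    induction n with
    | zero => simpa using hf2
    | succ k ih =>
      have hk := key 1 ((k : ℤ) + 2)
      rw [ih, hf1] at hk
      have hz : (((k : ℕ) : ℂ) + 1) * f (1 + ((k : ℤ) + 2)) = 0 := by
        push_cast at hk ⊢
        linear_combination hk
      rcases mul_eq_zero.mp hz with h' | h'
      · exact absurd h' (Nat.cast_add_one_ne_zero k)
      · rw [show ((k + 1 : ℕ) : ℤ) + 2 = 1 + ((k : ℤ) + 2) by push_cast; ring]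
        exact h'
  have down : ∀ n : ℕ, f (-(n : ℤ) - 2) = 0 := by
    intro n
    induction n with
    | zero => simpa using hfm2
    | succ k ih =>
      have hk := key (-1) (-(k : ℤ) - 2)
      rw [ih, hfm1] at hk
      have hz : (((k : ℕ) : ℂ) + 1) * f (-1 + (-(k : ℤ) - 2)) = 0 := by
        push_cast at hk ⊢
        linear_combination -hk
      rcases mul_eq_zero.mp hz with h' | h'
      · exact absurd h' (Nat.cast_add_one_ne_zero k)
      · rw [show -((k + 1 : ℕ) : ℤ) - 2 = -1 + (-(k : ℤ) - 2) by push_cast; ring]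
        exact h'
  have allf : ∀ m : ℤ, f m = 0 := by
    intro m
    by_cases h2 : 2 ≤ m
    · have := up (m - 2).toNat
      rwa [show ((m - 2).toNat : ℤ) + 2 = m by omega] at this
    · by_cases h2' : m ≤ -2
      · have := down (-m - 2).toNat
        rwa [show -((-m - 2).toNat : ℤ) - 2 = m by omega] at this
      · have hb1 : -1 ≤ m := by omega
        have hb2 : m ≤ 1 := by omega
        interval_cases m
        · exact hfm1
        · exact hf0
        · exact hf1
  constructor
  · have := allf (-1)
    simp only [hf] at this
    rwa [show (-mu - -1 : ℤ) = 1 - mu by ring] at this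
  · intro m n hmn
    have := allf m
    simp only [hf] at this
    rwa [show -mu - m = n by omega] at this
end

section
/- Suppose λ = −5 and μ ∈ ℤ*. Let ψ be a 2-cocycle on L_{−5,μ} with ψ(L_a, L_b) = 0 for all a, b, ψ(L_0, Y_n) = 0 for n ≠ −μ, and ψ(L_1, Y_{−μ−1}) = 0. Then ψ(L_{−m−μ}, Y_m) = 0 for all m ∈ ℤ. -/
lemma stmt14_aux (g : ℤ → ℂ) (hadd : ∀ a b : ℤ, a ≠ b → g (a + b) = g a + g b)
    (h1 : g 1 = 0) : ∀ n : ℤ, g n = 0 := by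
  have h0 : g 0 = 0 := by
    have := hadd 0 1 (by omega)
    simp at this
    exact this
  have h3 : g 3 = g 2 := by
    have := hadd 1 2 (by omega); rw [h1] at this; norm_num at this; linear_combination this
  have h4 : g 4 = g 2 := by
    have := hadd 1 3 (by omega); rw [h1, h3] at this; norm_num at this; linear_combination this
  have h5 : g 5 = g 2 := by
    have := hadd 1 4 (by omega); rw [h1, h4] at this; norm_num at this; linear_combination this
  have h2 : g 2 = 0 := by
    have := hadd 2 3 (by omega); rw [h3] at this; norm_num at this
    rw [h5] at this; linear_combination -this
  intro n
  induction n using Int.induction_on with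
  | zero => exact h0
  | succ k ih =>
    rcases eq_or_ne (k : ℤ) 1 with hk | hk
    · rw [hk]; norm_num; exact h2
    · have := hadd k 1 hk
      rw [h1, ih] at this; simpa using this
  | pred k ih =>
    have := hadd (-(k:ℤ) - 1) 1 (by omega)
    rw [h1, show (-(k:ℤ) - 1 + 1) = -k from by ring, ih] at this
    linear_combination -this

theorem stmt_14 (lam : ℂ) (hlam : lam = -5) (mu : ℤ) (hmu : mu ≠ 0)
    (V : Type*) [LieRing V] [LieAlgebra ℂ V]
    (L Y M : ℤ → V)
    (hLL : ∀ n m : ℤ, ⁅L n, L m⁆ = ((m : ℂ) - n) • L (m + n))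
    (hLY : ∀ n m : ℤ, ⁅L n, Y m⁆ = ((m : ℂ) - (lam + 1) * n / 2 + (mu : ℂ)) • Y (m + n))
    (hYY : ∀ n m : ℤ, ⁅Y n, Y m⁆ = ((m : ℂ) - n) • M (m + n))
    (hLM : ∀ n m : ℤ, ⁅L n, M m⁆ = ((m : ℂ) - lam * n + 2 * (mu : ℂ)) • M (m + n))
    (hYMbr : ∀ n m : ℤ, ⁅Y n, M m⁆ = 0)
    (hMMbr : ∀ n m : ℤ, ⁅M n, M m⁆ = 0)
    (ψ : V →ₗ[ℂ] V →ₗ[ℂ] ℂ)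
    (hskew : ∀ x y : V, ψ x y = - ψ y x)
    (hcoc : ∀ x y z : V, ψ ⁅x, y⁆ z + ψ ⁅y, z⁆ x + ψ ⁅z, x⁆ y = 0)
    (hLL0 : ∀ a b : ℤ, ψ (L a) (L b) = 0)
    (h0Y : ∀ n : ℤ, n ≠ -mu → ψ (L 0) (Y n) = 0)
    (h1Y : ψ (L 1) (Y (-mu - 1)) = 0) :
    ∀ m : ℤ, ψ (L (-m - mu)) (Y m) = 0 := by
  subst hlam
  -- general relation from the cocycle identity on (L a, L b, Y c)
  have hR : ∀ a b c : ℤ, ((b:ℂ) - a) * ψ (L (b + a)) (Y c)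
      - ((c:ℂ) + 2*b + mu) * ψ (L a) (Y (c + b))
      + ((c:ℂ) + 2*a + mu) * ψ (L b) (Y (c + a)) = 0 := by
    intro a b c
    have h := hcoc (L a) (L b) (Y c)
    rw [show ⁅Y c, L a⁆ = -⁅L a, Y c⁆ by rw [← lie_skew]] at h
    rw [hLL, hLY, hLY] at h
    simp only [map_smul, map_neg, smul_eq_mul, LinearMap.neg_apply, LinearMap.smul_apply] at h
    rw [hskew (Y (c + b)) (L a), hskew (Y (c + a)) (L b)] at h
    ring_nf at h ⊢
    linear_combination h
  -- additivity of g n = ψ (L n) (Y (-mu - n))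
  have hadd : ∀ a b : ℤ, a ≠ b →
      ψ (L (a + b)) (Y (-mu - (a + b)))
        = ψ (L a) (Y (-mu - a)) + ψ (L b) (Y (-mu - b)) := by
    intro a b hab
    have h := hR a b (-mu - a - b)
    rw [show b + a = a + b from by ring,
        show (-mu - a - b + b : ℤ) = -mu - a from by ring,
        show (-mu - a - b + a : ℤ) = -mu - b from by ring,
        show (-mu - a - b : ℤ) = -mu - (a + b) from by ring] at h
    have hba : ((b:ℂ) - a) ≠ 0 := by
      have : ((b - a : ℤ) : ℂ) ≠ 0 := Int.cast_ne_zero.mpr (by omega)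
      push_cast at this; convert this using 1
    have key : ((b:ℂ) - a) * (ψ (L (a + b)) (Y (-mu - (a + b)))
        - ψ (L a) (Y (-mu - a)) - ψ (L b) (Y (-mu - b))) = 0 := by
      push_cast at h ⊢
      linear_combination h
    rcases mul_eq_zero.mp key with h' | h'
    · exact absurd h' hba
    · linear_combination h'
  intro m
  have := stmt14_aux (fun n => ψ (L n) (Y (-mu - n))) hadd
    (by simpa using h1Y) (-m - mu)
  rw [show (-mu - (-m - mu) : ℤ) = m from by ring] at this
  exact this
end

section
/- Suppose λ = −1 and μ ∈ ℤ*. Let ψ be a 2-cocycle on L_{−1,μ} with ψ(L_a, L_b) = 0 for all a, b. Then for all m ∈ ℤ, ψ(Y_{−m−3μ}, M_m) = ψ(Y_{−3μ}, M_0); i.e., the value of ψ(Y_a, M_b) for a + b = −3μ is independent of a. -/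
theorem stmt_15 (lam : ℂ) (hlam : lam = -1) (mu : ℤ) (hmu : mu ≠ 0)
    (V : Type*) [LieRing V] [LieAlgebra ℂ V]
    (L Y M : ℤ → V)
    (hLL : ∀ n m : ℤ, ⁅L n, L m⁆ = ((m : ℂ) - n) • L (m + n))
    (hLY : ∀ n m : ℤ, ⁅L n, Y m⁆ = ((m : ℂ) - (lam + 1) * n / 2 + (mu : ℂ)) • Y (m + n))
    (hYY : ∀ n m : ℤ, ⁅Y n, Y m⁆ = ((m : ℂ) - n) • M (m + n))
    (hLM : ∀ n m : ℤ, ⁅L n, M m⁆ = ((m : ℂ) - lam * n + 2 * (mu : ℂ)) • M (m + n))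
    (hYMbr : ∀ n m : ℤ, ⁅Y n, M m⁆ = 0)
    (hMMbr : ∀ n m : ℤ, ⁅M n, M m⁆ = 0)
    (ψ : V →ₗ[ℂ] V →ₗ[ℂ] ℂ)
    (hskew : ∀ x y : V, ψ x y = - ψ y x)
    (hcoc : ∀ x y z : V, ψ ⁅x, y⁆ z + ψ ⁅y, z⁆ x + ψ ⁅z, x⁆ y = 0)
    (hLL0 : ∀ a b : ℤ, ψ (L a) (L b) = 0) :
    ∀ m : ℤ, ψ (Y (-m - 3 * mu)) (M m) = ψ (Y (-3 * mu)) (M 0) := by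
  intro m
  have h := hcoc (L (-m)) (Y (-3*mu)) (M m)
  rw [hLY, hYMbr, show ⁅M m, L (-m)⁆ = -⁅L (-m), M m⁆ from (lie_skew _ _).symm,
    hLM] at h
  subst hlam
  have hidx1 : (-3*mu) + (-m) = -m - 3*mu := by ring
  have hidx2 : m + (-m) = (0:ℤ) := by ring
  rw [hidx1, hidx2] at h
  have hc1 : ((-3*mu : ℤ) : ℂ) - (-1 + 1) * ((-m : ℤ) : ℂ) / 2 + (mu : ℂ) = -(2*mu) := by
    push_cast; ring
  have hc2 : ((m : ℤ) : ℂ) - (-1) * ((-m : ℤ) : ℂ) + 2 * (mu : ℂ) = 2*mu := by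
    push_cast; ring
  rw [hc1, hc2] at h
  simp only [map_zero, map_smul, map_neg, LinearMap.zero_apply, LinearMap.neg_apply,
    LinearMap.smul_apply, smul_eq_mul, add_zero, zero_add, neg_mul, neg_neg] at h
  have hmu' : (2*(mu:ℂ)) ≠ 0 := by
    simp [hmu]
  rw [show -(3*mu) = -3*mu from by ring, hskew (M 0) (Y (-3*mu))] at h
  exact mul_left_cancel₀ hmu' (by linear_combination -h)
end

section
/- The assignment c(M_n, Y_m) = δ_{n, −m−3μ} (all other basis pairings zero, extended skew-symmetrically and bilinearly) defines a 2-cocycle on L_{−1,μ} for μ ∈ ℤ*, i.e., it satisfies skew-symmetry and the cocycle Jacobi identity. -/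
/-- The free ℂ-module with basis {L_n, Y_n, M_n : n ∈ ℤ};
(n, 0) ↔ L_n, (n, 1) ↔ Y_n, (n, 2) ↔ M_n. -/
abbrev SVModule : Type := (ℤ × Fin 3) →₀ ℂ

/-- basis vector -/
noncomputable def sv (i : ℤ × Fin 3) : SVModule := Finsupp.single i 1

/-- The bracket of L_{λ,μ} on basis vectors. -/
noncomputable def svBracketAux (lam mu : ℂ) (i j : ℤ × Fin 3) : SVModule :=
  let n : ℤ := i.1
  let m : ℤ := j.1
  if i.2 = 0 ∧ j.2 = 0 then ((m : ℂ) - n) • sv (m + n, 0)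
  else if i.2 = 0 ∧ j.2 = 1 then ((m : ℂ) - (lam + 1) * n / 2 + mu) • sv (m + n, 1)
  else if i.2 = 1 ∧ j.2 = 0 then -(((n : ℂ) - (lam + 1) * m / 2 + mu) • sv (m + n, 1))
  else if i.2 = 1 ∧ j.2 = 1 then ((m : ℂ) - n) • sv (m + n, 2)
  else if i.2 = 0 ∧ j.2 = 2 then ((m : ℂ) - lam * n + 2 * mu) • sv (m + n, 2)
  else if i.2 = 2 ∧ j.2 = 0 then -(((n : ℂ) - lam * m + 2 * mu) • sv (m + n, 2))
  else 0

/-- The bilinear extension of the bracket. -/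
noncomputable def svBracket (lam mu : ℂ) :
    SVModule →ₗ[ℂ] SVModule →ₗ[ℂ] SVModule :=
  Finsupp.lsum ℂ fun i => LinearMap.toSpanSingleton ℂ _
    (Finsupp.lsum ℂ fun j => LinearMap.toSpanSingleton ℂ _ (svBracketAux lam mu i j))

/-- Cocycle values: c(M_n, Y_m) = δ_{n, -m-3μ}, extended skew-symmetrically,
all other basis pairings zero. -/
noncomputable def cVal (mu : ℤ) (i j : ℤ × Fin 3) : ℂ :=
  if i.2 = 2 ∧ j.2 = 1 ∧ i.1 = -j.1 - 3 * mu then 1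
  else if i.2 = 1 ∧ j.2 = 2 ∧ j.1 = -i.1 - 3 * mu then -1
  else 0

/-- The bilinear extension of the cocycle values. -/
noncomputable def cMap (mu : ℤ) : SVModule →ₗ[ℂ] SVModule →ₗ[ℂ] ℂ :=
  Finsupp.lsum ℂ fun i => LinearMap.toSpanSingleton ℂ _
    (Finsupp.lsum ℂ fun j => LinearMap.toSpanSingleton ℂ _ (cVal mu i j))

lemma cMap_single (mu : ℤ) (i j : ℤ × Fin 3) (a b : ℂ) :
    cMap mu (Finsupp.single i a) (Finsupp.single j b) = a * (b * cVal mu i j) := by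
  simp [cMap, Finsupp.lsum_single, LinearMap.toSpanSingleton_apply, smul_eq_mul,
    LinearMap.smul_apply]

lemma cMap_sv_single (mu : ℤ) (i j : ℤ × Fin 3) :
    cMap mu (sv i) (sv j) = cVal mu i j := by
  simp [sv, cMap_single]

lemma svBracket_single (lam mu : ℂ) (i j : ℤ × Fin 3) (a b : ℂ) :
    svBracket lam mu (Finsupp.single i a) (Finsupp.single j b)
      = (a * b) • svBracketAux lam mu i j := by
  simp [svBracket, Finsupp.lsum_single, LinearMap.toSpanSingleton_apply,
    LinearMap.smul_apply, smul_smul]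

section auxcases
variable (lam mu : ℂ) (n m : ℤ)
lemma aux00 : svBracketAux lam mu (n,0) (m,0) = ((m : ℂ) - n) • sv (m + n, 0) := by
  simp [svBracketAux]
lemma aux01 : svBracketAux lam mu (n,0) (m,1)
    = ((m : ℂ) - (lam + 1) * n / 2 + mu) • sv (m + n, 1) := by simp [svBracketAux]
lemma aux10 : svBracketAux lam mu (n,1) (m,0)
    = -(((n : ℂ) - (lam + 1) * m / 2 + mu) • sv (m + n, 1)) := by simp [svBracketAux]
lemma aux11 : svBracketAux lam mu (n,1) (m,1) = ((m : ℂ) - n) • sv (m + n, 2) := by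
  simp [svBracketAux]
lemma aux02 : svBracketAux lam mu (n,0) (m,2)
    = ((m : ℂ) - lam * n + 2 * mu) • sv (m + n, 2) := by simp [svBracketAux]
lemma aux20 : svBracketAux lam mu (n,2) (m,0)
    = -(((n : ℂ) - lam * m + 2 * mu) • sv (m + n, 2)) := by simp [svBracketAux]
lemma aux12 : svBracketAux lam mu (n,1) (m,2) = 0 := by simp [svBracketAux]
lemma aux21 : svBracketAux lam mu (n,2) (m,1) = 0 := by simp [svBracketAux]
lemma aux22 : svBracketAux lam mu (n,2) (m,2) = 0 := by simp [svBracketAux]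
end auxcases

lemma cVal01 (mu : ℤ) (n m : ℤ) : cVal mu (n,0) (m,1) = 0 := by simp [cVal]
lemma cVal10 (mu : ℤ) (n m : ℤ) : cVal mu (n,1) (m,0) = 0 := by simp [cVal]
lemma cVal00 (mu : ℤ) (n m : ℤ) : cVal mu (n,0) (m,0) = 0 := by simp [cVal]
lemma cVal02 (mu : ℤ) (n m : ℤ) : cVal mu (n,0) (m,2) = 0 := by simp [cVal]
lemma cVal20 (mu : ℤ) (n m : ℤ) : cVal mu (n,2) (m,0) = 0 := by simp [cVal]
lemma cVal11 (mu : ℤ) (n m : ℤ) : cVal mu (n,1) (m,1) = 0 := by simp [cVal]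
lemma cVal22 (mu : ℤ) (n m : ℤ) : cVal mu (n,2) (m,2) = 0 := by simp [cVal]
lemma cVal21 (mu : ℤ) (n m : ℤ) :
    cVal mu (n,2) (m,1) = if n = -m - 3 * mu then 1 else 0 := by simp [cVal]
lemma cVal12 (mu : ℤ) (n m : ℤ) :
    cVal mu (n,1) (m,2) = if m = -n - 3 * mu then -1 else 0 := by simp [cVal]

lemma fin3 (x : Fin 3) : x = 0 ∨ x = 1 ∨ x = 2 := by omega

lemma svBracket_sv (lam mu : ℂ) (i j : ℤ × Fin 3) :
    svBracket lam mu (sv i) (sv j) = svBracketAux lam mu i j := by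
  simp [sv, svBracket_single]

lemma keyJ (mu : ℤ) (i j k : ℤ × Fin 3) :
    cMap mu (svBracket (-1) (mu : ℂ) (sv i) (sv j)) (sv k)
      + cMap mu (svBracket (-1) (mu : ℂ) (sv j) (sv k)) (sv i)
      + cMap mu (svBracket (-1) (mu : ℂ) (sv k) (sv i)) (sv j) = 0 := by
  rcases i with ⟨n, a⟩; rcases j with ⟨m, b⟩; rcases k with ⟨p, c⟩
  simp only [svBracket_sv]
  rcases fin3 a with rfl | rfl | rfl <;> rcases fin3 b with rfl | rfl | rfl <;>
    rcases fin3 c with rfl | rfl | rfl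
  all_goals
    simp only [aux00, aux01, aux10, aux11, aux02, aux20, aux12, aux21, aux22,
      map_smul, map_neg, LinearMap.smul_apply, LinearMap.neg_apply, map_zero,
      LinearMap.zero_apply, cMap_sv_single, smul_eq_mul,
      cVal00, cVal01, cVal10, cVal02, cVal20, cVal11, cVal22, cVal21, cVal12]
  all_goals try split_ifs
  all_goals
    first
      | ring1
      | (exfalso; omega)
      | (have hp : p = -m - n - 3 * mu := by omega
         subst hp; push_cast; ring1)
      | (have hn : n = -m - p - 3 * mu := by omega
         subst hn; push_cast; ring1)
      | (have hm : m = -n - p - 3 * mu := by omega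
         subst hm; push_cast; ring1)

lemma keyS (mu : ℤ) (i j : ℤ × Fin 3) : cVal mu i j = - cVal mu j i := by
  rcases i with ⟨n, a⟩; rcases j with ⟨m, b⟩
  rcases fin3 a with rfl | rfl | rfl <;> rcases fin3 b with rfl | rfl | rfl <;>
    simp only [cVal00, cVal01, cVal10, cVal02, cVal20, cVal11, cVal22, cVal21, cVal12] <;>
    try split_ifs
  all_goals first | ring1 | (exfalso; omega) | norm_num

theorem stmt_17 (mu : ℤ) (hmu : mu ≠ 0) :
    (∀ x y : SVModule, cMap mu x y = - cMap mu y x) ∧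
    (∀ x y z : SVModule,
      cMap mu (svBracket (-1) (mu : ℂ) x y) z
        + cMap mu (svBracket (-1) (mu : ℂ) y z) x
        + cMap mu (svBracket (-1) (mu : ℂ) z x) y = 0) := by
  constructor
  · intro x y
    induction x using Finsupp.induction_linear with
    | zero => simp
    | add f g hf hg => simp only [map_add, LinearMap.add_apply, hf, hg]; ring
    | single i a =>
      induction y using Finsupp.induction_linear with
      | zero => simp
      | add f g hf hg => simp only [map_add, LinearMap.add_apply, hf, hg]; ring
      | single j b => rw [cMap_single, cMap_single, keyS]; ring
  · intro x y z
    induction x using Finsupp.induction_linear with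
    | zero => simp
    | add f g hf hg =>
      simp only [map_add, LinearMap.add_apply]
      linear_combination hf + hg
    | single i a =>
      induction y using Finsupp.induction_linear with
      | zero => simp
      | add f g hf hg =>
        simp only [map_add, LinearMap.add_apply]
        linear_combination hf + hg
      | single j b =>
        induction z using Finsupp.induction_linear with
        | zero => simp
        | add f g hf hg =>
          simp only [map_add, LinearMap.add_apply]
          linear_combination hf + hg
        | single k c =>
          have hsingle_smul : ∀ (p : ℤ × Fin 3) (a : ℂ),
              Finsupp.single p a = a • sv p := by
            intro p a; simp [sv, Finsupp.smul_single]
          rw [hsingle_smul i a, hsingle_smul j b, hsingle_smul k c]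
          simp only [map_smul, LinearMap.smul_apply, smul_eq_mul]
          have := keyJ mu i j k
          linear_combination (a * b * c) * this
end
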